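/- Let A, B be finite disjoint subsets of ℝⁿ with n ≥ 2, and let U ⊆ ℝⁿ be a connected open set containing A ∪ B. Then there exist open connected sets V, W ⊆ U with A ⊆ V, B ⊆ W, and V ∩ W = ∅. -/

import Mathlib

open Metric Set

section Push
variable {E : Type*} [NormedAddCommGroup E] [NormedSpace ℝ E] [CompleteSpace E]

lemma exists_push_homeo (z v : E) (r : ℝ) (hr : 0 < r) (hv : ‖v‖ < r) :
    ∃ h : E ≃ₜ E, h z = z + v ∧ (∀ w : E, w ∉ ball z r → h w = w) ∧
      (∀ w : E, h w ∈ ball z r ↔ w ∈ ball z r) := by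
  classical
  set φ : ℝ → ℝ := fun t => max (1 - t / r) 0 with hφ
  have hφ_lip : ∀ s t : ℝ, |φ s - φ t| ≤ |s - t| / r := by
    intro s t
    calc |φ s - φ t| ≤ |(1 - s/r) - (1 - t/r)| := abs_max_sub_max_le_abs _ _ _
    _ = |t - s| / r := by
        rw [show (1 - s/r) - (1 - t/r) = (t - s)/r by ring, abs_div, abs_of_pos hr]
    _ = |s - t| / r := by rw [abs_sub_comm]
  have hφ0 : ∀ t, 0 ≤ φ t := fun t => le_max_right _ _
  have hφ1 : ∀ t, 0 ≤ t → φ t ≤ 1 := by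
    intro t ht
    apply max_le _ zero_le_one
    have : 0 ≤ t / r := div_nonneg ht hr.le
    linarith
  have hφzero : ∀ t, r ≤ t → φ t = 0 := by
    intro t ht
    apply max_eq_right
    have h1 : 1 ≤ t / r := (one_le_div hr).2 ht
    linarith
  have hφone : φ 0 = 1 := by simp [hφ]
  set f : E → E := fun w => w + φ ‖w - z‖ • v with hf
  -- difference bound
  have hdiff : ∀ w w' : E, ‖f w - f w' - (w - w')‖ ≤ (‖v‖ / r) * ‖w - w'‖ := by
    intro w w'
    have : f w - f w' - (w - w') = (φ ‖w - z‖ - φ ‖w' - z‖) • v := by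
      simp only [hf]; module
    rw [this, norm_smul, Real.norm_eq_abs]
    have h1 : |φ ‖w - z‖ - φ ‖w' - z‖| ≤ ‖w - w'‖ / r := by
      refine (hφ_lip _ _).trans ?_
      have h0 := abs_norm_sub_norm_le (w - z) (w' - z)
      rw [sub_sub_sub_cancel_right] at h0
      gcongr
    calc |φ ‖w - z‖ - φ ‖w' - z‖| * ‖v‖ ≤ (‖w - w'‖ / r) * ‖v‖ := by
          gcongr
    _ = (‖v‖ / r) * ‖w - w'‖ := by ring
  have hk : ‖v‖ / r < 1 := (div_lt_one hr).2 hv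
  have hk0 : 0 ≤ ‖v‖ / r := div_nonneg (norm_nonneg _) hr.le
  have hlower : ∀ w w' : E, (1 - ‖v‖ / r) * ‖w - w'‖ ≤ ‖f w - f w'‖ := by
    intro w w'
    have h1 := norm_sub_norm_le (w - w') (w - w' - (f w - f w'))
    have h2 := hdiff w w'
    have h3 : ‖w - w' - (w - w' - (f w - f w'))‖ = ‖f w - f w'‖ := by
      congr 1; abel
    have h4 : ‖w - w' - (f w - f w')‖ = ‖f w - f w' - (w - w')‖ := norm_sub_rev _ _
    nlinarith [norm_nonneg (w - w')]
  have hinj : Function.Injective f := by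
    intro w w' hww
    have := hlower w w'
    rw [hww, sub_self, norm_zero] at this
    have h1 : 0 < 1 - ‖v‖ / r := by linarith
    have : ‖w - w'‖ ≤ 0 := by nlinarith [norm_nonneg (w - w')]
    have : w - w' = 0 := norm_le_zero_iff.1 this
    exact sub_eq_zero.1 this
  have hsurj : Function.Surjective f := by
    intro u
    set K : NNReal := ⟨‖v‖ / r, hk0⟩ with hK
    have hKlt : K < 1 := by
      rw [← NNReal.coe_lt_coe]; exact hk
    set g : E → E := fun w => u - φ ‖w - z‖ • v with hg
    have hglip : LipschitzWith K g := by
      apply LipschitzWith.of_dist_le_mul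
      intro w w'
      have h1 : g w - g w' = (φ ‖w' - z‖ - φ ‖w - z‖) • v := by
        simp only [hg]; module
      rw [dist_eq_norm, dist_eq_norm, h1, norm_smul, Real.norm_eq_abs]
      have h2 : |φ ‖w' - z‖ - φ ‖w - z‖| ≤ ‖w - w'‖ / r := by
        refine (hφ_lip _ _).trans ?_
        have h0 := abs_norm_sub_norm_le (w' - z) (w - z)
        rw [sub_sub_sub_cancel_right, norm_sub_rev w' w] at h0
        gcongr
      calc |φ ‖w' - z‖ - φ ‖w - z‖| * ‖v‖ ≤ (‖w - w'‖ / r) * ‖v‖ := by gcongr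
      _ = (K : ℝ) * ‖w - w'‖ := by rw [hK]; show _ = (‖v‖ / r) * ‖w - w'‖; ring
    have hcon : ContractingWith K g := ⟨hKlt, hglip⟩
    have : Nonempty E := ⟨z⟩
    refine ⟨hcon.fixedPoint g, ?_⟩
    have hfix : g (hcon.fixedPoint g) = hcon.fixedPoint g := hcon.fixedPoint_isFixedPt
    set w := hcon.fixedPoint g
    have : w = u - φ ‖w - z‖ • v := hfix.symm
    simp only [hf]
    rw [show w + φ ‖w - z‖ • v = (u - φ ‖w - z‖ • v) + φ ‖w - z‖ • v by rw [← this]]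
    abel
  have hfc : Continuous f := by
    apply Continuous.add continuous_id
    apply Continuous.smul _ continuous_const
    apply Continuous.max _ continuous_const
    fun_prop
  set e : E ≃ E := Equiv.ofBijective f ⟨hinj, hsurj⟩ with he
  have hsymm_lip : LipschitzWith ⟨(1 - ‖v‖ / r)⁻¹, inv_nonneg.2 (by linarith)⟩ e.symm := by
    apply LipschitzWith.of_dist_le_mul
    intro a b
    have h1 : f (e.symm a) = a := e.apply_symm_apply a
    have h2 : f (e.symm b) = b := e.apply_symm_apply b
    have h3 := hlower (e.symm a) (e.symm b)
    rw [h1, h2] at h3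
    rw [dist_eq_norm, dist_eq_norm]
    have hpos : 0 < 1 - ‖v‖ / r := by linarith
    show ‖e.symm a - e.symm b‖ ≤ (1 - ‖v‖ / r)⁻¹ * ‖a - b‖
    calc ‖e.symm a - e.symm b‖ ≤ ‖a - b‖ / (1 - ‖v‖ / r) := (le_div_iff₀' hpos).2 h3
    _ = (1 - ‖v‖ / r)⁻¹ * ‖a - b‖ := div_eq_inv_mul _ _
  set h : E ≃ₜ E := { e with continuous_toFun := hfc, continuous_invFun := hsymm_lip.continuous }
  have happ : ∀ w, h w = f w := fun _ => rfl
  have hball : ∀ w : E, w ∈ ball z r → f w ∈ ball z r := by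
    intro w hw
    rw [mem_ball, dist_eq_norm] at hw ⊢
    set t := ‖w - z‖ with ht
    have ht0 : 0 ≤ t := norm_nonneg _
    have hφt : φ t = 1 - t / r := by
      apply max_eq_left
      have : t / r < 1 := (div_lt_one hr).2 hw
      linarith
    have h1 : f w - z = (w - z) + φ t • v := by simp only [hf]; abel
    calc ‖f w - z‖ ≤ ‖w - z‖ + ‖φ t • v‖ := by rw [h1]; exact norm_add_le _ _
    _ = t + (1 - t/r) * ‖v‖ := by
        rw [norm_smul, Real.norm_eq_abs, hφt, abs_of_nonneg (by nlinarith [(div_lt_one hr).2 hw])]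
    _ < r := by
        have hq : t / r < 1 := (div_lt_one hr).2 hw
        have hpos' : 0 < 1 - t / r := by linarith
        have h6 : (1 - t/r) * r = r - t := by field_simp
        have h7 := mul_lt_mul_of_pos_left hv hpos'
        linarith
  have hfix_out : ∀ w : E, w ∉ ball z r → f w = w := by
    intro w hw
    rw [mem_ball, dist_eq_norm, not_lt] at hw
    simp only [hf]
    rw [hφzero _ hw, zero_smul, add_zero]
  refine ⟨h, ?_, ?_, ?_⟩
  · rw [happ]; simp only [hf]; rw [sub_self, norm_zero, hφone, one_smul]
  · intro w hw; rw [happ]; exact hfix_out w hw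
  · intro w
    rw [happ]
    constructor
    · intro hfw
      by_contra hw
      rw [hfix_out w hw] at hfw
      exact hw hfw
    · exact hball w

end Push

section Conn
variable {E : Type*} [NormedAddCommGroup E] [NormedSpace ℝ E]

lemma punctured_ball_preconn (h1 : 1 < Module.rank ℝ E) (z : E) (r : ℝ) (hr : 0 < r) :
    IsPreconnected (ball z r \ {z}) := by
  have hS : IsPathConnected (sphere z (r/2)) :=
    isPathConnected_sphere h1 z (by linarith)
  obtain ⟨c, hc, -⟩ := id hS
  have hSsub : sphere z (r/2) ⊆ ball z r \ {z} := by
    intro x hx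
    rw [mem_sphere] at hx
    constructor
    · rw [mem_ball, hx]; linarith
    · simp only [mem_singleton_iff]
      intro h; rw [h] at hx; simp at hx; linarith
  set T : E → Set E := fun y =>
    ((fun t : ℝ => z + t • (y - z)) '' Ioo 0 (r / ‖y - z‖)) ∪ sphere z (r/2) with hT
  have key : ∀ y ∈ ball z r \ {z}, IsPreconnected (T y) ∧ y ∈ T y ∧ T y ⊆ ball z r \ {z} := by
    intro y hy
    obtain ⟨hyb, hyz⟩ := hy
    rw [mem_ball, dist_eq_norm] at hyb
    have hynz : y - z ≠ 0 := sub_ne_zero.2 hyz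
    have hn0 : 0 < ‖y - z‖ := norm_pos_iff.2 hynz
    have himg : ∀ t ∈ Ioo 0 (r / ‖y - z‖), z + t • (y - z) ∈ ball z r \ {z} := by
      intro t ht
      obtain ⟨ht0, htr⟩ := ht
      constructor
      · rw [mem_ball, dist_eq_norm, add_sub_cancel_left, norm_smul, Real.norm_eq_abs,
          abs_of_pos ht0]
        calc t * ‖y - z‖ < (r / ‖y - z‖) * ‖y - z‖ := by gcongr
        _ = r := div_mul_cancel₀ r hn0.ne'
      · simp only [mem_singleton_iff]
        intro h
        have : t • (y - z) = 0 := by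
          have := congrArg (fun w => w - z) h
          simpa using this
        rcases smul_eq_zero.1 this with h' | h'
        · linarith
        · exact hynz h'
    have hcommon : ∃ m, m ∈ ((fun t : ℝ => z + t • (y - z)) '' Ioo 0 (r / ‖y - z‖)) ∧
        m ∈ sphere z (r/2) := by
      refine ⟨z + ((r/2) / ‖y - z‖) • (y - z), ?_, ?_⟩
      · exact mem_image_of_mem _ ⟨by positivity, by gcongr <;> linarith⟩
      · rw [mem_sphere, dist_eq_norm, add_sub_cancel_left, norm_smul, Real.norm_eq_abs,
          abs_of_pos (by positivity), div_mul_cancel₀ _ hn0.ne']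
    obtain ⟨m, hm1, hm2⟩ := hcommon
    refine ⟨?_, ?_, ?_⟩
    · apply IsPreconnected.union m hm1 hm2
      · apply IsPreconnected.image isPreconnected_Ioo
        apply Continuous.continuousOn
        fun_prop
      · exact hS.isConnected.isPreconnected
    · left
      refine ⟨1, ⟨zero_lt_one, (one_lt_div hn0).2 hyb⟩, by simp⟩
    · rintro x (⟨t, ht, rfl⟩ | hx)
      · exact himg t ht
      · exact hSsub hx
  have heq : ball z r \ {z} = ⋃₀ (T '' (ball z r \ {z})) := by
    apply Set.Subset.antisymm
    · intro y hy
      exact ⟨T y, mem_image_of_mem _ hy, (key y hy).2.1⟩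
    · rintro x ⟨s, ⟨y, hy, rfl⟩, hx⟩
      exact (key y hy).2.2 hx
  rw [heq]
  apply isPreconnected_sUnion c
  · rintro s ⟨y, hy, rfl⟩
    exact subset_union_right hc
  · rintro s ⟨y, hy, rfl⟩
    exact (key y hy).1

lemma diff_singleton_preconn (h1 : 1 < Module.rank ℝ E) {U : Set E} (hUo : IsOpen U)
    (hU : IsPreconnected U) (p : E) : IsPreconnected (U \ {p}) := by
  by_cases hp : p ∈ U
  swap
  · rwa [diff_singleton_eq_self hp]
  obtain ⟨ε, hε, hball⟩ := Metric.isOpen_iff.1 hUo p hp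
  set P := ball p ε \ {p} with hP
  have hPpre : IsPreconnected P := punctured_ball_preconn h1 p ε hε
  have hPne : P.Nonempty := by
    have hS : IsPathConnected (sphere p (ε/2)) := isPathConnected_sphere h1 p (by linarith)
    obtain ⟨c, hc, -⟩ := id hS
    rw [mem_sphere] at hc
    refine ⟨c, ?_, ?_⟩
    · rw [mem_ball, hc]; linarith
    · simp only [mem_singleton_iff]; intro h; rw [h] at hc; simp at hc; linarith
  have hPsub : P ⊆ U \ {p} := fun x hx => ⟨hball hx.1, hx.2⟩
  -- key step, symmetric in u v
  have key : ∀ u v : Set E, IsOpen u → IsOpen v → U \ {p} ⊆ u ∪ v →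
      (( U \ {p}) ∩ v).Nonempty → P ⊆ u → ((U \ {p}) ∩ (u ∩ v)).Nonempty := by
    intro u v hu hv hcov hvne hPu
    have hc1 : U ⊆ (u ∪ ball p ε) ∪ v := by
      intro x hx
      by_cases hxp : x = p
      · exact Or.inl (Or.inr (by rw [hxp]; exact mem_ball_self hε))
      · rcases hcov ⟨hx, hxp⟩ with h | h
        · exact Or.inl (Or.inl h)
        · exact Or.inr h
    obtain ⟨a, haP⟩ := id hPne
    have hane : (U ∩ (u ∪ ball p ε)).Nonempty := ⟨a, (hPsub haP).1, Or.inr haP.1⟩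
    have hvne' : (U ∩ v).Nonempty := hvne.imp fun x hx => ⟨hx.1.1, hx.2⟩
    obtain ⟨q, hqU, hq', hqv⟩ := hU (u ∪ ball p ε) v (hu.union isOpen_ball) hv hc1 hane hvne'
    -- helper: if p ∈ some open set w with w ⊆ v or nested, find punctured point
    have hsmall : ∀ w : Set E, IsOpen w → p ∈ w →
        ∃ a' : E, a' ∈ (ball p ε \ {p}) ∧ a' ∈ w := by
      intro w hw hpw
      obtain ⟨δ₀, hδ₀, hbw⟩ := Metric.isOpen_iff.1 hw p hpw
      set δ := min δ₀ ε with hδ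
      have hδpos : 0 < δ := lt_min hδ₀ hε
      obtain ⟨a, ha⟩ := id hPne
      set a' := p + (δ / (2 * ε)) • (a - p) with ha'
      have hap : a - p ≠ 0 := sub_ne_zero.2 ha.2
      have hnorm : ‖a' - p‖ = (δ / (2 * ε)) * ‖a - p‖ := by
        rw [ha', add_sub_cancel_left, norm_smul, Real.norm_eq_abs, abs_of_pos (by positivity)]
      have hlt : ‖a' - p‖ < δ := by
        rw [hnorm]
        have h2 : ‖a - p‖ < ε := by rw [← dist_eq_norm]; exact ha.1
        have hcpos : (0:ℝ) < δ / (2 * ε) := by positivity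
        calc (δ / (2 * ε)) * ‖a - p‖ < (δ / (2 * ε)) * (2 * ε) :=
              mul_lt_mul_of_pos_left (by linarith) hcpos
        _ = δ := div_mul_cancel₀ δ (by positivity)
      refine ⟨a', ⟨?_, ?_⟩, hbw (by rw [mem_ball, dist_eq_norm]; exact hlt.trans_le (min_le_left _ _))⟩
      · rw [mem_ball, dist_eq_norm]; exact hlt.trans_le (min_le_right _ _)
      · simp only [mem_singleton_iff]
        intro h
        apply hap
        have : a' - p = 0 := by rw [h]; simp
        rw [ha', add_sub_cancel_left] at this
        rcases smul_eq_zero.1 this with h' | h'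
        · exact absurd h' (ne_of_gt (by positivity))
        · exact h'
    rcases hq' with hqu | hqball
    · by_cases hqp : q = p
      · subst hqp
        obtain ⟨a', ha'P, ha'uv⟩ := hsmall (u ∩ v) (hu.inter hv) ⟨hqu, hqv⟩
        exact ⟨a', hPsub ha'P, ha'uv⟩
      · exact ⟨q, ⟨hqU, hqp⟩, hqu, hqv⟩
    · by_cases hqp : q = p
      · subst hqp
        obtain ⟨a', ha'P, ha'v⟩ := hsmall v hv hqv
        exact ⟨a', hPsub ha'P, hPu ha'P, ha'v⟩
      · have hqP : q ∈ P := ⟨hqball, hqp⟩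
        exact ⟨q, ⟨hqU, hqp⟩, hPu hqP, hqv⟩
  -- main argument
  intro u v hu hv hcov hune hvne
  by_cases hPuv : (P ∩ (u ∩ v)).Nonempty
  · exact hPuv.imp fun x hx => ⟨hPsub hx.1, hx.2⟩
  · have hPcov : P ⊆ u ∪ v := fun x hx => hcov (hPsub hx)
    have : P ⊆ u ∨ P ⊆ v := by
      by_cases h' : (P ∩ u).Nonempty
      · by_cases h'' : (P ∩ v).Nonempty
        · exact absurd (hPpre u v hu hv hPcov h' h'') hPuv
        · left; intro x hx
          rcases hPcov hx with h | h
          · exact h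
          · exact absurd ⟨x, hx, h⟩ h''
      · right; intro x hx
        rcases hPcov hx with h | h
        · exact absurd ⟨x, hx, h⟩ h'
        · exact h
    rcases this with h | h
    · exact key u v hu hv hcov hvne h
    · have := key v u hv hu (by rwa [union_comm]) hune h
      exact this.imp fun x hx => ⟨hx.1, hx.2.2, hx.2.1⟩

end Conn

section Move
variable {E : Type*} [NormedAddCommGroup E] [NormedSpace ℝ E] [CompleteSpace E]

omit [CompleteSpace E] in
lemma diff_finite_preconn (h1 : 1 < Module.rank ℝ E) {U : Set E} (hUo : IsOpen U)
    (hU : IsPreconnected U) {F : Set E} (hF : F.Finite) : IsPreconnected (U \ F) := by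
  refine Set.Finite.induction_on (motive := fun F _ => IsPreconnected (U \ F)) F hF (by simpa using hU) ?_
  intro a F haF hFfin ih
  have h1' : U \ insert a F = (U \ F) \ {a} := by
    rw [Set.insert_eq, Set.union_comm, ← Set.diff_diff]
  rw [h1']
  exact diff_singleton_preconn h1 (hUo.sdiff hFfin.isClosed) ih a

lemma move_homeo (h1 : 1 < Module.rank ℝ E) {U : Set E} (hUo : IsOpen U)
    (hU : IsPreconnected U) {F : Set E} (hF : F.Finite) {x y : E}
    (hx : x ∈ U \ F) (hy : y ∈ U \ F) :
    ∃ h : E ≃ₜ E, h '' U = U ∧ (∀ f ∈ F, h f = f) ∧ h x = y := by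
  classical
  have hUF : IsOpen (U \ F) := hUo.sdiff hF.isClosed
  have hpre : IsPreconnected (U \ F) := diff_finite_preconn h1 hUo hU hF
  -- radius function
  have hrad : ∀ w ∈ U \ F, ∃ r : ℝ, 0 < r ∧ ball w r ⊆ U \ F :=
    fun w hw => Metric.isOpen_iff.1 hUF w hw
  choose! rad hradpos hradsub using hrad
  -- local moves
  have hlocal : ∀ w ∈ U \ F, ∀ z ∈ ball w (rad w),
      ∃ h : E ≃ₜ E, h '' U = U ∧ (∀ f ∈ F, h f = f) ∧ h w = z := by
    intro w hw z hz
    have hvr : ‖z - w‖ < rad w := by rw [← dist_eq_norm]; exact mem_ball.1 hz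
    obtain ⟨h, hmove, hfixout, hballiff⟩ :=
      exists_push_homeo w (z - w) (rad w) (hradpos w hw) hvr
    have hballU : ball w (rad w) ⊆ U := fun q hq => (hradsub w hw hq).1
    have himg : h '' U = U := by
      apply Set.Subset.antisymm
      · rintro _ ⟨q, hq, rfl⟩
        by_cases hqb : q ∈ ball w (rad w)
        · exact hballU ((hballiff q).2 hqb)
        · rw [hfixout q hqb]; exact hq
      · intro u hu
        by_cases hub : u ∈ ball w (rad w)
        · have h2 : h (h.symm u) = u := h.apply_symm_apply u
          have : h.symm u ∈ ball w (rad w) := by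
            rw [← hballiff (h.symm u), h2]; exact hub
          exact ⟨h.symm u, hballU this, h2⟩
        · exact ⟨u, hu, hfixout u hub⟩
    refine ⟨h, himg, ?_, by rw [hmove]; abel⟩
    intro f hf
    apply hfixout
    intro hfb
    exact (hradsub w hw hfb).2 hf
  -- the set of reachable points
  set T : Set E := {y' | ∃ h : E ≃ₜ E, h '' U = U ∧ (∀ f ∈ F, h f = f) ∧ h x = y'} with hT
  have hTsub : T ⊆ U \ F := by
    rintro y' ⟨h, himg, hfix, rfl⟩
    constructor
    · rw [← himg]; exact mem_image_of_mem _ hx.1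
    · intro hyF
      have : h (h x) = h x := hfix _ hyF
      have hx' : h x = x := h.injective this
      rw [hx'] at hyF
      exact hx.2 hyF
  have hxT : x ∈ T := ⟨Homeomorph.refl E, by simp, fun f _ => rfl, rfl⟩
  -- if y ∈ T we are done
  by_cases hyT : y ∈ T
  · exact hyT
  exfalso
  set u : Set E := ⋃ w ∈ T, ball w (rad w) with hu
  set v : Set E := ⋃ w ∈ (U \ F) \ T, ball w (rad w) with hv
  have huo : IsOpen u := isOpen_biUnion fun _ _ => isOpen_ball
  have hvo : IsOpen v := isOpen_biUnion fun _ _ => isOpen_ball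
  have hcov : U \ F ⊆ u ∪ v := by
    intro w hw
    by_cases hwT : w ∈ T
    · exact Or.inl (mem_biUnion hwT (mem_ball_self (hradpos w hw)))
    · exact Or.inr (mem_biUnion ⟨hw, hwT⟩ (mem_ball_self (hradpos w hw)))
  have hune : ((U \ F) ∩ u).Nonempty :=
    ⟨x, hx, mem_biUnion hxT (mem_ball_self (hradpos x hx))⟩
  have hvne : ((U \ F) ∩ v).Nonempty :=
    ⟨y, hy, mem_biUnion ⟨hy, hyT⟩ (mem_ball_self (hradpos y hy))⟩
  obtain ⟨q, hq, hqu, hqv⟩ := hpre u v huo hvo hcov hune hvne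
  -- q reachable via u
  obtain ⟨w₁, hw₁T, hqball₁⟩ := mem_iUnion₂.1 hqu
  obtain ⟨w₂, hw₂, hqball₂⟩ := mem_iUnion₂.1 hqv
  have hw₁UF : w₁ ∈ U \ F := hTsub hw₁T
  obtain ⟨h₁, h₁img, h₁fix, h₁x⟩ := hw₁T
  obtain ⟨h₂, h₂img, h₂fix, h₂move⟩ := hlocal w₁ hw₁UF q hqball₁
  have hqT : q ∈ T := by
    refine ⟨h₁.trans h₂, ?_, ?_, ?_⟩
    · have hco : ⇑(h₁.trans h₂) = ⇑h₂ ∘ ⇑h₁ := rfl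
      rw [hco, Set.image_comp, h₁img, h₂img]
    · intro f hf; simp only [Homeomorph.trans_apply]; rw [h₁fix f hf, h₂fix f hf]
    · simp only [Homeomorph.trans_apply]; rw [h₁x, h₂move]
  -- then w₂ reachable from q
  obtain ⟨h₃, h₃img, h₃fix, h₃x⟩ := hqT
  obtain ⟨h₄, h₄img, h₄fix, h₄move⟩ := hlocal w₂ hw₂.1 q hqball₂
  have hw₂T : w₂ ∈ T := by
    refine ⟨h₃.trans h₄.symm, ?_, ?_, ?_⟩
    · have hco : ⇑(h₃.trans h₄.symm) = ⇑h₄.symm ∘ ⇑h₃ := rfl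
      rw [hco, Set.image_comp, h₃img]
      conv_lhs => rw [← h₄img]
      rw [Set.image_image]
      simp only [Homeomorph.symm_apply_apply, Set.image_id']
    · intro f hf
      simp only [Homeomorph.trans_apply]
      rw [h₃fix f hf]
      have : h₄ f = f := h₄fix f hf
      conv_lhs => rw [← this]
      exact h₄.symm_apply_apply f
    · simp only [Homeomorph.trans_apply]
      rw [h₃x, ← h₄move]
      exact h₄.symm_apply_apply w₂
  exact hw₂.2 hw₂T

end Move

section Place
variable {E : Type*} [NormedAddCommGroup E] [NormedSpace ℝ E] [CompleteSpace E]

lemma place_homeo (h1 : 1 < Module.rank ℝ E) {U : Set E} (hUo : IsOpen U)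
    (hU : IsPreconnected U) (S : Finset E) (hS : ↑S ⊆ U) (τ : E → E)
    (hinj : Set.InjOn τ ↑S) (hτU : ∀ s ∈ S, τ s ∈ U) :
    ∃ h : E ≃ₜ E, h '' U = U ∧ ∀ s ∈ S, h s = τ s := by
  classical
  induction S using Finset.induction_on with
  | empty => exact ⟨Homeomorph.refl E, by simp, by simp⟩
  | @insert a S haS ih =>
    have hSsub : ↑S ⊆ U := by
      intro s hs; exact hS (by simp [hs])
    have hinj' : Set.InjOn τ ↑S := hinj.mono (by simp [Set.subset_insert])
    obtain ⟨h, himg, hval⟩ := ih hSsub hinj' (fun s hs => hτU s (Finset.mem_insert_of_mem hs))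
    set F : Set E := τ '' ↑S with hF
    have hFfin : F.Finite := (S.finite_toSet).image τ
    have haU : a ∈ U := hS (by simp)
    have hhaU : h a ∈ U := by rw [← himg]; exact mem_image_of_mem _ haU
    have hhaF : h a ∉ F := by
      rintro ⟨s, hs, heq⟩
      have : h s = τ s := hval s hs
      rw [← this] at heq
      have : s = a := h.injective heq
      rw [this] at hs; exact haS hs
    have hτaU : τ a ∈ U := hτU a (Finset.mem_insert_self a S)
    have hτaF : τ a ∉ F := by
      rintro ⟨s, hs, heq⟩
      have : a = s := hinj (by simp) (by simp [hs]) heq.symm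
      rw [this] at haS; exact haS hs
    obtain ⟨h₂, h₂img, h₂fix, h₂move⟩ :=
      move_homeo h1 hUo hU hFfin ⟨hhaU, hhaF⟩ ⟨hτaU, hτaF⟩
    refine ⟨h.trans h₂, ?_, ?_⟩
    · have hco : ⇑(h.trans h₂) = ⇑h₂ ∘ ⇑h := rfl
      rw [hco, Set.image_comp, himg, h₂img]
    · intro s hs
      rcases Finset.mem_insert.1 hs with rfl | hs'
      · simp only [Homeomorph.trans_apply]; rw [h₂move]
      · simp only [Homeomorph.trans_apply]
        rw [hval s hs', h₂fix _ (mem_image_of_mem _ hs')]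

end Place

theorem stmt3 (n : ℕ) (hn : 2 ≤ n) (A B U : Set (EuclideanSpace ℝ (Fin n)))
    (hA : A.Finite) (hB : B.Finite) (hAB : Disjoint A B)
    (hUo : IsOpen U) (hUc : IsConnected U) (hsub : A ∪ B ⊆ U) :
    ∃ V W : Set (EuclideanSpace ℝ (Fin n)), IsOpen V ∧ IsOpen W ∧
      IsConnected V ∧ IsConnected W ∧ V ⊆ U ∧ W ⊆ U ∧ A ⊆ V ∧ B ⊆ W ∧ V ∩ W = ∅ := by
  classical
  have h1 : 1 < Module.rank ℝ (EuclideanSpace ℝ (Fin n)) := by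
    have hfr : Module.finrank ℝ (EuclideanSpace ℝ (Fin n)) = n := by
      rw [finrank_euclideanSpace, Fintype.card_fin]
    have hre : (Module.finrank ℝ (EuclideanSpace ℝ (Fin n)) : Cardinal)
        = Module.rank ℝ (EuclideanSpace ℝ (Fin n)) := Module.finrank_eq_rank ℝ _
    rw [← hre, hfr]
    exact_mod_cast hn.trans_lt' one_lt_two
  -- pick two disjoint balls in U
  obtain ⟨p, hp⟩ := hUc.nonempty
  obtain ⟨r, hr, hball⟩ := Metric.isOpen_iff.1 hUo p hp
  have hn0 : 0 < n := by omega
  set e : EuclideanSpace ℝ (Fin n) := EuclideanSpace.single (⟨0, hn0⟩ : Fin n) (1:ℝ) with he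
  have hnorme : ‖e‖ = 1 := by
    rw [he, EuclideanSpace.norm_single]; simp
  set q : EuclideanSpace ℝ (Fin n) := p + (r/2) • e with hq
  set ρ : ℝ := r/8 with hρ
  have hρpos : 0 < ρ := by positivity
  have hdistpq : dist q p = r / 2 := by
    rw [hq, dist_eq_norm, add_sub_cancel_left, norm_smul, Real.norm_eq_abs,
      abs_of_pos (by positivity), hnorme, mul_one]
  have hbp : ball p ρ ⊆ U := by
    intro x hx
    apply hball
    rw [mem_ball] at hx ⊢
    rw [hρ] at hx
    linarith
  have hbq : ball q ρ ⊆ U := by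
    intro x hx
    apply hball
    rw [mem_ball] at hx ⊢
    calc dist x p ≤ dist x q + dist q p := dist_triangle _ _ _
    _ < ρ + r/2 := by linarith [hdistpq]
    _ < r := by rw [hρ]; linarith
  have hdisj : ball p ρ ∩ ball q ρ = ∅ := by
    rw [Set.eq_empty_iff_forall_notMem]
    rintro x ⟨hx1, hx2⟩
    rw [mem_ball] at hx1 hx2
    have := dist_triangle q x p
    rw [dist_comm q x] at this
    rw [hρ] at hx1 hx2
    rw [hdistpq] at this
    linarith
  -- target function
  set SA := hA.toFinset with hSA
  set SB := hB.toFinset with hSB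
  set S := SA ∪ SB with hSdef
  have tinj : Function.Injective (fun i : ℕ => ρ / (i + 2 : ℝ)) := by
    intro i j hij
    simp only at hij
    have hi : (0:ℝ) < (i:ℝ) + 2 := by positivity
    have hj : (0:ℝ) < (j:ℝ) + 2 := by positivity
    rw [div_eq_div_iff hi.ne' hj.ne'] at hij
    have : (i:ℝ) = j := by nlinarith
    exact_mod_cast this
  set eA := SA.equivFin with heA
  set eB := SB.equivFin with heB
  set τ : EuclideanSpace ℝ (Fin n) → EuclideanSpace ℝ (Fin n) := fun x =>
    if hx : x ∈ SA then p + (ρ / ((eA ⟨x, hx⟩ : ℕ) + 2)) • e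
    else if hx : x ∈ SB then q + (ρ / ((eB ⟨x, hx⟩ : ℕ) + 2)) • e
    else x with hτ
  have hcoef : ∀ i : ℕ, 0 < ρ / (i + 2 : ℝ) ∧ ρ / (i + 2 : ℝ) < ρ := by
    intro i
    constructor
    · positivity
    · rw [div_lt_iff₀ (by positivity)]
      nlinarith [Nat.cast_nonneg (α := ℝ) i]
  have hmemp : ∀ (c : ℝ), 0 < c → c < ρ → p + c • e ∈ ball p ρ := by
    intro c hc hcρ
    rw [mem_ball, dist_eq_norm, add_sub_cancel_left, norm_smul, Real.norm_eq_abs,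
      abs_of_pos hc, hnorme, mul_one]
    exact hcρ
  have hmemq : ∀ (c : ℝ), 0 < c → c < ρ → q + c • e ∈ ball q ρ := by
    intro c hc hcρ
    rw [mem_ball, dist_eq_norm, add_sub_cancel_left, norm_smul, Real.norm_eq_abs,
      abs_of_pos hc, hnorme, mul_one]
    exact hcρ
  have hτA : ∀ x ∈ SA, τ x ∈ ball p ρ := by
    intro x hx
    rw [hτ]
    simp only [hx, dif_pos]
    exact hmemp _ (hcoef _).1 (hcoef _).2
  have hAB' : ∀ x ∈ SB, x ∉ SA := by
    intro x hx hx'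
    rw [hSB, Set.Finite.mem_toFinset] at hx
    rw [hSA, Set.Finite.mem_toFinset] at hx'
    exact (hAB.ne_of_mem hx' hx) rfl
  have hτB : ∀ x ∈ SB, τ x ∈ ball q ρ := by
    intro x hx
    rw [hτ]
    simp only [hAB' x hx, dif_neg, not_false_iff, hx, dif_pos]
    exact hmemq _ (hcoef _).1 (hcoef _).2
  have hτinj : Set.InjOn τ ↑S := by
    intro x hx y hy hxy
    rw [Finset.mem_coe, hSdef, Finset.mem_union] at hx hy
    have hsmul : Function.Injective (fun c : ℝ => c • e) := by
      apply smul_left_injective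
      intro h0
      rw [h0, norm_zero] at hnorme
      norm_num at hnorme
    rcases hx with hxA | hxB <;> rcases hy with hyA | hyB
    · have h1' := hxA; have h2' := hyA
      rw [hτ] at hxy
      simp only [hxA, hyA, dif_pos] at hxy
      have := add_left_cancel hxy
      have := hsmul this
      have := tinj this
      have : (⟨x, hxA⟩ : {z // z ∈ SA}) = ⟨y, hyA⟩ := eA.injective (Fin.val_injective this)
      exact Subtype.ext_iff.1 this
    · exfalso
      have m1 : τ x ∈ ball p ρ := hτA x hxA
      have m2 : τ y ∈ ball q ρ := hτB y hyB
      rw [hxy] at m1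
      exact Set.eq_empty_iff_forall_notMem.1 hdisj (τ y) ⟨m1, m2⟩
    · exfalso
      have m1 : τ x ∈ ball q ρ := hτB x hxB
      have m2 : τ y ∈ ball p ρ := hτA y hyA
      rw [hxy] at m1
      exact Set.eq_empty_iff_forall_notMem.1 hdisj (τ y) ⟨m2, m1⟩
    · rw [hτ] at hxy
      simp only [hAB' x hxB, hAB' y hyB, dif_neg, not_false_iff, hxB, hyB, dif_pos] at hxy
      have := add_left_cancel hxy
      have := hsmul this
      have := tinj this
      have : (⟨x, hxB⟩ : {z // z ∈ SB}) = ⟨y, hyB⟩ := eB.injective (Fin.val_injective this)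
      exact Subtype.ext_iff.1 this
  have hSU : ↑S ⊆ U := by
    intro x hx
    rw [Finset.mem_coe, hSdef, Finset.mem_union] at hx
    apply hsub
    rcases hx with h | h
    · exact Or.inl ((Set.Finite.mem_toFinset hA).1 h)
    · exact Or.inr ((Set.Finite.mem_toFinset hB).1 h)
  have hτU : ∀ s ∈ S, τ s ∈ U := by
    intro s hs
    rw [hSdef, Finset.mem_union] at hs
    rcases hs with h | h
    · exact hbp (hτA s h)
    · exact hbq (hτB s h)
  obtain ⟨h, himg, hval⟩ := place_homeo h1 hUo hUc.isPreconnected S hSU τ hτinj hτU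
  refine ⟨⇑h ⁻¹' ball p ρ, ⇑h ⁻¹' ball q ρ, ?_, ?_, ?_, ?_, ?_, ?_, ?_, ?_, ?_⟩
  · exact isOpen_ball.preimage h.continuous
  · exact isOpen_ball.preimage h.continuous
  · have : ⇑h ⁻¹' ball p ρ = ⇑h.symm '' ball p ρ := (h.symm.image_eq_preimage_symm _).symm
    rw [this]
    exact ((convex_ball p ρ).isConnected (nonempty_ball.2 hρpos)).image _
      h.symm.continuous.continuousOn
  · have : ⇑h ⁻¹' ball q ρ = ⇑h.symm '' ball q ρ := (h.symm.image_eq_preimage_symm _).symm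
    rw [this]
    exact ((convex_ball q ρ).isConnected (nonempty_ball.2 hρpos)).image _
      h.symm.continuous.continuousOn
  · intro x hx
    have : h x ∈ U := hbp hx
    rw [← himg] at this
    obtain ⟨u', hu', heq⟩ := this
    rwa [← h.injective heq]
  · intro x hx
    have : h x ∈ U := hbq hx
    rw [← himg] at this
    obtain ⟨u', hu', heq⟩ := this
    rwa [← h.injective heq]
  · intro a ha
    have haS : a ∈ SA := (Set.Finite.mem_toFinset hA).2 ha
    have : h a = τ a := hval a (by rw [hSdef, Finset.mem_union]; exact Or.inl haS)
    rw [Set.mem_preimage, this]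
    exact hτA a haS
  · intro b hb
    have hbS : b ∈ SB := (Set.Finite.mem_toFinset hB).2 hb
    have : h b = τ b := hval b (by rw [hSdef, Finset.mem_union]; exact Or.inr hbS)
    rw [Set.mem_preimage, this]
    exact hτB b hbS
  · rw [← Set.preimage_inter, hdisj, Set.preimage_empty]
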